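/- For any graph G, γ_gr^t(G) ≤ 2·bc(G), where bc(G) is the minimum number of complete bipartite subgraphs needed to cover all edges of G. -/

import Mathlib

open SimpleGraph

/-- A legal open neighborhood sequence in `G`. -/
def IsOpenLegal {α : Type*} (G : SimpleGraph α) (L : List α) : Prop :=
  L.Nodup ∧ ∀ i : Fin L.length, ∃ w, G.Adj (L.get i) w ∧
    ∀ j : Fin L.length, j < i → ¬ G.Adj (L.get j) w

/-- The Grundy total domination number of `G`. -/
noncomputable def grundyT {α : Type*} (G : SimpleGraph α) : ℕ :=
  sSup {n | ∃ L : List α, IsOpenLegal G L ∧ L.length = n}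

/-- A legal closed neighborhood (dominating) sequence in `G`. -/
def IsClosedLegal {α : Type*} (G : SimpleGraph α) (L : List α) : Prop :=
  L.Nodup ∧ ∀ i : Fin L.length, ∃ w, (G.Adj (L.get i) w ∨ L.get i = w) ∧
    ∀ j : Fin L.length, j < i → ¬ (G.Adj (L.get j) w ∨ L.get j = w)

/-- The Grundy domination number of `G`. -/
noncomputable def grundyDom {α : Type*} (G : SimpleGraph α) : ℕ :=
  sSup {n | ∃ L : List α, IsClosedLegal G L ∧ L.length = n}

/-- The direct (tensor) product of simple graphs. -/
def directProd {α β : Type*} (G : SimpleGraph α) (H : SimpleGraph β) : SimpleGraph (α × β) where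
  Adj x y := G.Adj x.1 y.1 ∧ H.Adj x.2 y.2
  symm := ⟨fun _ _ h => ⟨h.1.symm, h.2.symm⟩⟩
  loopless := ⟨fun _ h => h.1.ne rfl⟩

/-- The lexicographic product of simple graphs. -/
def lexProd {α β : Type*} (G : SimpleGraph α) (H : SimpleGraph β) : SimpleGraph (α × β) where
  Adj x y := G.Adj x.1 y.1 ∨ (x.1 = y.1 ∧ H.Adj x.2 y.2)
  symm := by
    constructor
    rintro x y (h | ⟨h1, h2⟩)
    · exact Or.inl h.symm
    · exact Or.inr ⟨h1.symm, h2.symm⟩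
  loopless := by
    constructor
    rintro x (h | ⟨_, h⟩)
    · exact h.ne rfl
    · exact h.ne rfl

/-- The strong product of simple graphs. -/
def strongProd {α β : Type*} (G : SimpleGraph α) (H : SimpleGraph β) : SimpleGraph (α × β) where
  Adj x y := (G.Adj x.1 y.1 ∧ x.2 = y.2) ∨ (x.1 = y.1 ∧ H.Adj x.2 y.2) ∨
    (G.Adj x.1 y.1 ∧ H.Adj x.2 y.2)
  symm := by
    constructor
    rintro x y (⟨h, e⟩ | ⟨e, h⟩ | ⟨h1, h2⟩)
    · exact Or.inl ⟨h.symm, e.symm⟩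
    · exact Or.inr (Or.inl ⟨e.symm, h.symm⟩)
    · exact Or.inr (Or.inr ⟨h1.symm, h2.symm⟩)
  loopless := by
    constructor
    rintro x (⟨h, _⟩ | ⟨_, h⟩ | ⟨h, _⟩)
    · exact h.ne rfl
    · exact h.ne rfl
    · exact h.ne rfl

/-- The minimum number of complete bipartite subgraphs of `G` covering all edges of `G`. -/
noncomputable def bc {α : Type*} (G : SimpleGraph α) : ℕ :=
  sInf {k | ∃ A B : Fin k → Set α,
    (∀ i a b, a ∈ A i → b ∈ B i → G.Adj a b) ∧
    (∀ u v, G.Adj u v → ∃ i, (u ∈ A i ∧ v ∈ B i) ∨ (v ∈ A i ∧ u ∈ B i))}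

/-- `aD G L` is the number of entries of `L` not adjacent to any earlier entry. -/
noncomputable def aD {α : Type*} (G : SimpleGraph α) (L : List α) : ℕ :=
  {i : Fin L.length | ∀ j : Fin L.length, j < i → ¬ G.Adj (L.get j) (L.get i)}.ncard

/-- The vertex cover number of `G`. -/
noncomputable def vertexCoverNum {α : Type*} (G : SimpleGraph α) : ℕ :=
  sInf {n | ∃ S : Finset α, S.card = n ∧ ∀ u v, G.Adj u v → u ∈ S ∨ v ∈ S}

/-- The independence number of `G`. -/
noncomputable def indepNum {α : Type*} (G : SimpleGraph α) : ℕ :=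
  sSup {n | ∃ S : Finset α, S.card = n ∧ ∀ u ∈ S, ∀ v ∈ S, ¬ G.Adj u v}

theorem grundyT_le_two_mul_bc {α : Type*} [Fintype α] (G : SimpleGraph α) :
    grundyT G ≤ 2 * bc G := by
  classical
  have hne : {k | ∃ A B : Fin k → Set α,
      (∀ i a b, a ∈ A i → b ∈ B i → G.Adj a b) ∧
      (∀ u v, G.Adj u v → ∃ i, (u ∈ A i ∧ v ∈ B i) ∨ (v ∈ A i ∧ u ∈ B i))}.Nonempty := by
    refine ⟨Fintype.card (α × α), ?_⟩
    set e := (Fintype.equivFin (α × α)).symm with he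
    refine ⟨fun i => if G.Adj (e i).1 (e i).2 then {(e i).1} else ∅,
      fun i => {(e i).2}, ?_, ?_⟩
    · intro i a b ha hb
      by_cases h : G.Adj (e i).1 (e i).2
      · simp only [h, if_true, Set.mem_singleton_iff] at ha
        simp only [Set.mem_singleton_iff] at hb
        subst ha; subst hb; exact h
      · simp [h] at ha
    · intro u v huv
      refine ⟨Fintype.equivFin (α × α) (u, v), Or.inl ?_⟩
      simp [he, huv]
  obtain ⟨A, B, hAB, hcov⟩ := Nat.sInf_mem hne
  apply csSup_le'
  rintro n ⟨L, ⟨hnd, hleg⟩, rfl⟩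
  choose w hw hw2 using hleg
  choose t ht using fun i => hcov _ _ (hw i)
  let g : Fin L.length → Fin (bc G) × Bool :=
    fun i => (t i, if L.get i ∈ A (t i) ∧ w i ∈ B (t i) then true else false)
  have key : ∀ i i' : Fin L.length, i < i' → g i ≠ g i' := by
    intro i i' hlt hg
    have hti : t i = t i' := congrArg Prod.fst hg
    have hb : (if L.get i ∈ A (t i) ∧ w i ∈ B (t i) then true else false) =
        (if L.get i' ∈ A (t i') ∧ w i' ∈ B (t i') then true else false) :=
      congrArg Prod.snd hg
    by_cases h1 : L.get i ∈ A (t i) ∧ w i ∈ B (t i)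
    · have h2 : L.get i' ∈ A (t i') ∧ w i' ∈ B (t i') := by
        by_contra h2
        rw [if_pos h1, if_neg h2] at hb
        exact Bool.noConfusion hb
      exact hw2 i' i hlt (hAB (t i') (L.get i) (w i') (hti ▸ h1.1) h2.2)
    · have h2 : ¬ (L.get i' ∈ A (t i') ∧ w i' ∈ B (t i')) := by
        intro h2
        rw [if_neg h1, if_pos h2] at hb
        exact Bool.noConfusion hb
      have h1' := (ht i).resolve_left h1
      have h2' := (ht i').resolve_left h2
      exact hw2 i' i hlt
        ((hAB (t i') (w i') (L.get i) h2'.1 (hti ▸ h1'.2)).symm)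
  have hginj : Function.Injective g := by
    intro i i' h
    by_contra hne'
    rcases lt_or_gt_of_ne hne' with hlt | hlt
    · exact key i i' hlt h
    · exact key i' i hlt h.symm
  have := Fintype.card_le_of_injective g hginj
  simpa [mul_comm] using this
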